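/- Let n be a positive integer, N a cyclic group of order n, M a finite abelian group annihilated by n, and b: M × M → N a unimodular bilinear pairing. Let ψ: M → M be a group endomorphism that is an isometry for b, i.e., b(ψ(x), ψ(y)) = b(x,y) for all x, y ∈ M. Then the pairing Ker(ψ − id) × M/Im(ψ − id) → N, (x, [z]) ↦ b(x, z), is well defined (b(x,z) depends only on the class of z modulo Im(ψ − id) when ψ(x) = x) and is unimodular, i.e., it induces isomorphisms Ker(ψ − id) ≅ Hom(M/Im(ψ − id), N) and M/Im(ψ − id) ≅ Hom(Ker(ψ − id), N). -/

import Mathlib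

private lemma aux_enough {N : Type*} [AddCommGroup N] (n : ℕ) (hn : 0 < n)
    (hNcyc : IsAddCyclic N) (hNcard : Nat.card N = n) :
    HasEnoughRootsOfUnity (Multiplicative N) n := by
  have : Finite N := Nat.finite_of_card_ne_zero (by omega)
  have : IsCyclic (Multiplicative N) := isCyclic_multiplicative
  obtain ⟨g, hg⟩ := IsCyclic.exists_generator (α := Multiplicative N)
  constructor
  · refine ⟨g, ?_⟩
    have : orderOf g = n := by
      rw [orderOf_eq_card_of_forall_mem_zpowers hg]
      exact hNcard
    exact this ▸ IsPrimitiveRoot.orderOf g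
  · have : IsCyclic (Multiplicative N)ˣ :=
      isCyclic_of_surjective _ (toUnits (G := Multiplicative N)).surjective
    infer_instance

private lemma aux_card_hom {N : Type*} [AddCommGroup N] (n : ℕ) (hn : 0 < n)
    (hNcyc : IsAddCyclic N) (hNcard : Nat.card N = n)
    (A : Type*) [AddCommGroup A] [Finite A] (hA : ∀ a : A, n • a = 0) :
    Nat.card (A →+ N) = Nat.card A := by
  have hN : Finite N := Nat.finite_of_card_ne_zero (by omega)
  have : NeZero n := ⟨by omega⟩
  have h1 : HasEnoughRootsOfUnity (Multiplicative N) n := aux_enough n hn hNcyc hNcard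
  have hexp : Monoid.exponent (Multiplicative A) ∣ n :=
    Monoid.exponent_dvd_of_forall_pow_eq_one fun g => hA g.toAdd
  have h2 : HasEnoughRootsOfUnity (Multiplicative N) (Monoid.exponent (Multiplicative A)) :=
    HasEnoughRootsOfUnity.of_dvd _ hexp
  obtain ⟨e⟩ := CommGroup.monoidHom_mulEquiv_of_hasEnoughRootsOfUnity
    (Multiplicative A) (Multiplicative N)
  have e2 : (A →+ N) ≃ (Multiplicative A →* Multiplicative N) := AddMonoidHom.toMultiplicative
  have e3 : (Multiplicative A →* Multiplicative N) ≃* (Multiplicative A →* (Multiplicative N)ˣ) :=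
    MulEquiv.monoidHomCongrRight (toUnits (G := Multiplicative N))
  calc Nat.card (A →+ N) = Nat.card (Multiplicative A →* (Multiplicative N)ˣ) :=
        Nat.card_congr (e2.trans e3.toEquiv)
    _ = Nat.card (Multiplicative A) := Nat.card_congr e.toEquiv
    _ = Nat.card A := rfl

private lemma aux_sub_eq {A : Type*} [AddCommGroup A] [Finite A] (S T : AddSubgroup A)
    (h : S ≤ T) (hc : Nat.card T ≤ Nat.card S) : S = T := by
  rw [← SetLike.coe_set_eq]
  exact Set.eq_of_subset_of_ncard_le h
    (by simpa [← Nat.card_coe_set_eq] using hc) (Set.toFinite _)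



/-- Let `n` be a positive integer, `N` a cyclic group of order `n`, `M` a finite abelian group
annihilated by `n`, and `b : M × M → N` a unimodular bilinear pairing.  If `ψ : M → M` is a group
endomorphism which is an isometry for `b`, then the pairing
`Ker(ψ - id) × M/Im(ψ - id) → N, (x, [z]) ↦ b(x, z)` is well defined and unimodular. -/
theorem unimodular_pairing_ker_coker {M N : Type*} [AddCommGroup M] [AddCommGroup N]
    [Finite M] (n : ℕ) (hn : 0 < n) (hNcyc : IsAddCyclic N) (hNcard : Nat.card N = n)
    (hM : ∀ x : M, n • x = 0)
    (b : M →+ M →+ N)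
    (hb : Function.Bijective ⇑b) (hb' : Function.Bijective ⇑b.flip)
    (ψ : M →+ M) (hψ : ∀ x y : M, b (ψ x) (ψ y) = b x y) :
    (∀ x ∈ (ψ - AddMonoidHom.id M).ker, ∀ z z' : M,
        z - z' ∈ (ψ - AddMonoidHom.id M).range → b x z = b x z') ∧
    ∃ P : ↥(ψ - AddMonoidHom.id M).ker →+ (M ⧸ (ψ - AddMonoidHom.id M).range) →+ N,
      (∀ (x : ↥(ψ - AddMonoidHom.id M).ker) (z : M),
          P x (QuotientAddGroup.mk z) = b x z) ∧
      Function.Bijective ⇑P ∧ Function.Bijective ⇑P.flip := by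
  classical
  set f := ψ - AddMonoidHom.id M with hfdef
  set K := f.ker with hKdef
  set I := f.range with hIdef
  have hN : Finite N := Nat.finite_of_card_ne_zero (by omega)
  haveI instKN : Finite (↥K →+ N) := Finite.of_injective _ (DFunLike.coe_injective)
  haveI instMN : Finite (M →+ N) := Finite.of_injective _ (DFunLike.coe_injective)
  haveI instQIN : Finite ((M ⧸ I) →+ N) := Finite.of_injective _ (DFunLike.coe_injective)
  -- fixed points
  have hxfix : ∀ x ∈ K, ψ x = x := by
    intro x hx
    have h0 : ψ x - x = 0 := by
      simpa [hKdef, hfdef, AddMonoidHom.mem_ker] using hx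
    exact sub_eq_zero.mp h0
  have hzero : ∀ x ∈ K, ∀ i ∈ I, b x i = 0 := by
    intro x hx i hi
    obtain ⟨w, hw⟩ := hi
    have h1 : b x (ψ w) = b x w := by
      conv_rhs => rw [← hψ x w]
      rw [hxfix x hx]
    have h2 : b x i = b x (ψ w) - b x w := by
      rw [← hw]
      show b x (ψ w - w) = _
      rw [map_sub]
    rw [h2, h1, sub_self]
  have hwd : ∀ x ∈ K, ∀ z z' : M, z - z' ∈ I → b x z = b x z' := by
    intro x hx z z' hzz
    have h0 := hzero x hx _ hzz
    rw [map_sub] at h0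
    exact sub_eq_zero.mp h0
  refine ⟨hwd, ?_⟩
  -- cardinalities
  have posQK : 0 < Nat.card (M ⧸ K) := Nat.card_pos
  have posI : 0 < Nat.card I := Nat.card_pos
  have posK : 0 < Nat.card K := Nat.card_pos
  have cardM1 : Nat.card M = Nat.card (M ⧸ K) * Nat.card K :=
    AddSubgroup.card_eq_card_quotient_mul_card_addSubgroup K
  have cardM2 : Nat.card M = Nat.card (M ⧸ I) * Nat.card I :=
    AddSubgroup.card_eq_card_quotient_mul_card_addSubgroup I
  have cardQK : Nat.card (M ⧸ K) = Nat.card I :=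
    Nat.card_congr (QuotientAddGroup.quotientKerEquivRange f).toEquiv
  have hKQ : Nat.card K = Nat.card (M ⧸ I) := by
    have h := cardM1.symm.trans cardM2
    rw [cardQK] at h
    rw [mul_comm (Nat.card (M ⧸ I)) (Nat.card I)] at h
    exact Nat.eq_of_mul_eq_mul_left posI h
  -- dual cardinalities
  have hcQI : Nat.card ((M ⧸ I) →+ N) = Nat.card (M ⧸ I) := by
    refine aux_card_hom n hn hNcyc hNcard _ fun q => ?_
    induction q using QuotientAddGroup.induction_on with
    | H z =>
      show n • ((QuotientAddGroup.mk' I) z) = 0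
      rw [← map_nsmul, hM, map_zero]
  have hcQK : Nat.card ((M ⧸ K) →+ N) = Nat.card (M ⧸ K) := by
    refine aux_card_hom n hn hNcyc hNcard _ fun q => ?_
    induction q using QuotientAddGroup.induction_on with
    | H z =>
      show n • ((QuotientAddGroup.mk' K) z) = 0
      rw [← map_nsmul, hM, map_zero]
  have hcK : Nat.card (↥K →+ N) = Nat.card ↥K := by
    refine aux_card_hom n hn hNcyc hNcard _ fun x => ?_
    apply Subtype.ext
    simpa using hM (x : M)
  have hcMN : Nat.card (M →+ N) = Nat.card M := aux_card_hom n hn hNcyc hNcard _ hM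
  -- the pairing P
  let P : ↥K →+ (M ⧸ I) →+ N :=
    { toFun := fun x => QuotientAddGroup.lift I (b x.1) (fun i hi => hzero x.1 x.2 i hi)
      map_zero' := by
        ext q
        simp
      map_add' := fun x y => by
        ext q
        simp
        rfl }
  have hPmk : ∀ (x : ↥K) (z : M), P x (QuotientAddGroup.mk z) = b x.1 z := fun x z => rfl
  have hPinj : Function.Injective ⇑P := by
    intro x y hxy
    apply Subtype.ext
    apply hb.injective
    ext z
    have h := congrArg (fun g : (M ⧸ I) →+ N => g (QuotientAddGroup.mk z)) hxy
    simpa [hPmk] using h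
  -- restriction map and its surjectivity
  let res : (M →+ N) →+ (↥K →+ N) :=
    { toFun := fun g => g.comp K.subtype
      map_zero' := rfl
      map_add' := fun _ _ => rfl }
  have hkerres : Nat.card res.ker = Nat.card ((M ⧸ K) →+ N) := by
    refine (Nat.card_congr (Equiv.ofBijective
      (fun h : (M ⧸ K) →+ N => (⟨h.comp (QuotientAddGroup.mk' K), ?_⟩ : res.ker))
      ⟨?_, ?_⟩)).symm
    · show (h.comp (QuotientAddGroup.mk' K)).comp K.subtype = 0
      ext x
      have hx0 : ((x : M) : M ⧸ K) = 0 := (QuotientAddGroup.eq_zero_iff _).mpr x.2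
      simp [hx0]
    · intro h₁ h₂ hh
      have hh' : h₁.comp (QuotientAddGroup.mk' K) = h₂.comp (QuotientAddGroup.mk' K) :=
        congrArg Subtype.val hh
      ext q
      exact congrArg (fun g : M →+ N => g q) hh'
    · rintro ⟨g, hg⟩
      have hg' : ∀ x ∈ K, g x = 0 := by
        intro x hx
        have := congrArg (fun u : ↥K →+ N => u ⟨x, hx⟩) hg
        exact this
      refine ⟨QuotientAddGroup.lift K g hg', ?_⟩
      apply Subtype.ext
      ext z
      rfl
  have hresrange : Nat.card res.range = Nat.card ↥K := by
    have h1 : Nat.card (M →+ N) = Nat.card ((M →+ N) ⧸ res.ker) * Nat.card res.ker :=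
      AddSubgroup.card_eq_card_quotient_mul_card_addSubgroup res.ker
    have h2 : Nat.card ((M →+ N) ⧸ res.ker) = Nat.card res.range :=
      Nat.card_congr (QuotientAddGroup.quotientKerEquivRange res).toEquiv
    rw [h2, hkerres, hcQK, hcMN, cardM1] at h1
    rw [mul_comm (Nat.card (M ⧸ K)) (Nat.card ↥K)] at h1
    exact (Nat.eq_of_mul_eq_mul_right posQK h1).symm
  have hres_surj : Function.Surjective ⇑res := by
    have htop : res.range = ⊤ := AddSubgroup.eq_top_of_card_eq _ (by rw [hresrange, hcK])
    exact AddMonoidHom.range_eq_top.mp htop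
  -- the map R : M →+ (K →+ N)
  let R : M →+ (↥K →+ N) := res.comp b.flip
  have hRsurj : Function.Surjective ⇑R := by
    have hco : ⇑R = ⇑res ∘ ⇑b.flip := rfl
    rw [hco]
    exact hres_surj.comp hb'.2
  have hRapp : ∀ (z : M) (x : ↥K), R z x = b x.1 z := fun z x => rfl
  have hIker : I ≤ R.ker := by
    intro i hi
    rw [AddMonoidHom.mem_ker]
    ext x
    simpa [hRapp] using hzero x.1 x.2 i hi
  have hcardRker : Nat.card R.ker = Nat.card I := by
    have h1 : Nat.card M = Nat.card (M ⧸ R.ker) * Nat.card R.ker :=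
      AddSubgroup.card_eq_card_quotient_mul_card_addSubgroup R.ker
    have h2 : Nat.card (M ⧸ R.ker) = Nat.card R.range :=
      Nat.card_congr (QuotientAddGroup.quotientKerEquivRange R).toEquiv
    have h3 : R.range = ⊤ := AddMonoidHom.range_eq_top.mpr hRsurj
    have h4 : Nat.card R.range = Nat.card (↥K →+ N) := by
      rw [h3]
      simpa using Nat.card_congr AddSubgroup.topEquiv.toEquiv
    rw [h2, h4, hcK] at h1
    rw [cardM1, cardQK, mul_comm (Nat.card ↥I) (Nat.card ↥K)] at h1
    exact (Nat.eq_of_mul_eq_mul_left posK h1).symm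
  have hIeq : I = R.ker := aux_sub_eq I R.ker hIker (le_of_eq hcardRker)
  -- flip injective
  have hPflipinj : Function.Injective ⇑P.flip := by
    rw [injective_iff_map_eq_zero]
    intro q hq
    induction q using QuotientAddGroup.induction_on with
    | H z =>
      have hz : z ∈ R.ker := by
        rw [AddMonoidHom.mem_ker]
        ext x
        have := congrArg (fun u : ↥K →+ N => u x) hq
        simpa [hRapp, hPmk] using this
      exact (QuotientAddGroup.eq_zero_iff z).mpr (hIeq ▸ hz)
  refine ⟨P, hPmk, ?_, ?_⟩
  · exact (Nat.bijective_iff_injective_and_card _).mpr ⟨hPinj, by rw [hcQI, ← hKQ]⟩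
  · exact (Nat.bijective_iff_injective_and_card _).mpr ⟨hPflipinj, by rw [hcK, hKQ]⟩
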